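/- Fix n ∈ ℕ and m ≥ 2. For every vector X ∈ ℝⁿ and every index j ∈ {1,…,n}, the quantity C_j^m(X) satisfies the recursion C_j^m(X) = (Σ_{i=1}^n X_i · C_i^{m−1}(X)) − (m−1) · X_j · C_j^{m−1}(X). Equivalently, in matrix form, the row vector C^m = (C_1^m,…,C_n^m) satisfies C^m = C^{m−1} · 𝐗 · (J − (m−1)I), where 𝐗 is the diagonal matrix with X on the main diagonal, J is the n×n all-ones matrix, and I the n×n identity. -/

import Mathlib

open MeasureTheory ProbabilityTheory Real Set

noncomputable section

/-- The real-valued vertex configuration associated to a boolean configuration. -/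
def boolToR (n : ℕ) (X : Fin n → Bool) : Fin n → ℝ := fun i => if X i then 1 else 0

/-- The 1-norm on ℝⁿ. -/
def norm1 (n : ℕ) (x : Fin n → ℝ) : ℝ := ∑ i, |x i|

/-- `C_j^m(X)`: the sum over (m-1)-tuples of pairwise distinct indices, all distinct
from `j`, of the products of the corresponding entries of `X`; `C_j^1 = 1`. -/
def Cvec (n m : ℕ) (X : Fin n → ℝ) (j : Fin n) : ℝ :=
  ∑ g ∈ Finset.univ.filter (fun g : Fin (m - 1) ↪ Fin n => ∀ k, g k ≠ j),
    ∏ k, X (g k)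

/-- The subgraph counting function with parameters `p`, `m₁,…,m_l`, `α₁,…,α_l`. -/
def scf (n l : ℕ) (p : ℝ) (m : Fin l → ℕ) (α : Fin l → ℝ) (X : Fin n → ℝ) : ℝ :=
  (∑ q, (α q / (n : ℝ) ^ (m q - 1)) * ∑ g : Fin (m q) ↪ Fin n, ∏ k, X (g k)) +
    Real.log (p / (1 - p)) * ∑ i, |X i|

/-- The discrete derivative `∂ⱼf(X) = (f(X^{j←1}) - f(X^{j←0}))/2`. -/
def dder (n : ℕ) (f : (Fin n → ℝ) → ℝ) (X : Fin n → ℝ) (j : Fin n) : ℝ :=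
  (f (Function.update X j 1) - f (Function.update X j 0)) / 2

/-- The polynomial extension of the discrete gradient of the subgraph counting function:
`∂ⱼf(X) = Σ_q (m_q α_q/(2 n^{m_q-1})) C_j^{m_q}(X) + ½ log(p/(1-p))`. -/
def gradf (n l : ℕ) (p : ℝ) (m : Fin l → ℕ) (α : Fin l → ℝ) (X : Fin n → ℝ)
    (j : Fin n) : ℝ :=
  (∑ q, ((m q : ℝ) * α q / (2 * (n : ℝ) ^ (m q - 1))) * Cvec n (m q) X j) +
    Real.log (p / (1 - p)) / 2

/-- `C_α = max{2, ½|log(p/(1-p))| + ½ Σ_q |α_q| m_q (m_q - 1)}`. -/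
def Calpha (l : ℕ) (p : ℝ) (m : Fin l → ℕ) (α : Fin l → ℝ) : ℝ :=
  max 2 (|Real.log (p / (1 - p))| / 2 + (∑ q, |α q| * (m q : ℝ) * ((m q : ℝ) - 1)) / 2)

/-- `Φ(X) = (1ₙ + tanh(∇f(X)))/2`, entrywise. -/
def Phi (n l : ℕ) (p : ℝ) (m : Fin l → ℕ) (α : Fin l → ℝ) (X : Fin n → ℝ) :
    Fin n → ℝ :=
  fun j => (1 + Real.tanh (gradf n l p m α X j)) / 2

/-- The set `X_f` of near fixed points of `X ↦ (1ₙ + tanh(∇f(X)))/2` in `[0,1]ⁿ`. -/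
def Xf (n l : ℕ) (p : ℝ) (m : Fin l → ℕ) (α : Fin l → ℝ) : Set (Fin n → ℝ) :=
  {X | (∀ i, X i ∈ Set.Icc (0:ℝ) 1) ∧
    norm1 n (fun j => X j - Phi n l p m α X j) ≤
      5000 * (Calpha l p m α) ^ 2 * (n : ℝ) ^ ((7:ℝ)/8)}

/-- The one-dimensional fixed point function `φ_α`. -/
def phiA (n l : ℕ) (p : ℝ) (m : Fin l → ℕ) (α : Fin l → ℝ) (x : ℝ) : ℝ :=
  (1 + Real.tanh (Real.log (p / (1 - p)) / 2 +
    (∑ q, (m q : ℝ) * α q * (∏ i ∈ Finset.Icc 1 (m q - 1), (1 - (i : ℝ) / n)) *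
      x ^ (m q - 1)) / 2)) / 2

lemma emb_fiber_sum {n k : ℕ} (X : Fin n → ℝ) (j : Fin n) (p : Fin (k+1)) :
    ∑ g ∈ Finset.univ.filter (fun g : Fin (k+1) ↪ Fin n => g p = j), ∏ t, X (g t)
      = X j * ∑ h ∈ Finset.univ.filter (fun h : Fin k ↪ Fin n => ∀ t, h t ≠ j),
          ∏ t, X (h t) := by
  rw [Finset.mul_sum]
  refine Finset.sum_bij' (fun g _hg => ⟨fun t => g (p.succAbove t),
      fun a b hab => Fin.succAbove_right_injective (g.injective hab)⟩)
    (fun h hh => ⟨Fin.insertNth p j h, ?_⟩) ?_ ?_ ?_ ?_ ?_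
  · -- injectivity of insertNth
    simp only [Finset.mem_filter] at hh
    intro a b hab
    rcases eq_or_ne a p with rfl | ha
    · rcases eq_or_ne b a with rfl | hb
      · rfl
      · obtain ⟨t, rfl⟩ := Fin.exists_succAbove_eq hb
        simp only [Fin.insertNth_apply_same, Fin.insertNth_apply_succAbove] at hab
        exact absurd hab.symm (hh.2 t)
    · obtain ⟨t, rfl⟩ := Fin.exists_succAbove_eq ha
      rcases eq_or_ne b p with rfl | hb
      · simp only [Fin.insertNth_apply_same, Fin.insertNth_apply_succAbove] at hab
        exact absurd hab (hh.2 t)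
      · obtain ⟨s, rfl⟩ := Fin.exists_succAbove_eq hb
        simp only [Fin.insertNth_apply_succAbove] at hab
        exact congrArg p.succAbove (h.injective hab)
  · intro g hg
    simp only [Finset.mem_filter, Finset.mem_univ, true_and] at hg ⊢
    intro t hgt
    exact (Fin.succAbove_ne p t) (g.injective (hgt.trans hg.symm))
  · intro h hh
    simp [Fin.insertNth_apply_same]
    exact Fin.insertNth_apply_same (α := fun _ => Fin n) p j h
  · intro g hg
    simp only [Finset.mem_filter, Finset.mem_univ, true_and] at hg
    ext s
    show ((Fin.insertNth (α := fun _ => Fin n) p j (fun t => g (p.succAbove t)) s : Fin n) : ℕ) = g s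
    rcases eq_or_ne s p with rfl | hs
    · rw [Fin.insertNth_apply_same, hg]
    · obtain ⟨t, rfl⟩ := Fin.exists_succAbove_eq hs
      rw [Fin.insertNth_apply_succAbove]
  · intro h hh
    ext t
    show ((Fin.insertNth (α := fun _ => Fin n) p j h (p.succAbove t) : Fin n) : ℕ) = h t
    rw [Fin.insertNth_apply_succAbove]
  · intro g hg
    simp only [Finset.mem_filter, Finset.mem_univ, true_and] at hg
    rw [Fin.prod_univ_succAbove (fun s => X (g s)) p, hg]
    rfl

/-- the recursion
`C_j^m(X) = (Σ_i X_i C_i^{m-1}(X)) - (m-1) X_j C_j^{m-1}(X)`, which is the entrywise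
form of the matrix identity `C^m = C^{m-1} · X · (J - (m-1)I)`. -/
theorem stmt0 (n m : ℕ) (hm : 2 ≤ m) (X : Fin n → ℝ) (j : Fin n) :
    Cvec n m X j =
      (∑ i, X i * Cvec n (m - 1) X i) - ((m : ℝ) - 1) * X j * Cvec n (m - 1) X j := by
  obtain ⟨k, rfl⟩ : ∃ k, m = k + 2 := ⟨m - 2, by omega⟩
  have hC : ∀ i : Fin n, Cvec n (k + 2 - 1) X i
      = ∑ h ∈ Finset.univ.filter (fun h : Fin k ↪ Fin n => ∀ t, h t ≠ i),
          ∏ t, X (h t) := fun i => rfl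
  have hCm : Cvec n (k + 2) X j
      = ∑ g ∈ Finset.univ.filter (fun g : Fin (k+1) ↪ Fin n => ∀ t, g t ≠ j),
          ∏ t, X (g t) := rfl
  -- total sum over all embeddings splits as avoid-j plus hit-j
  have hsplit := Finset.sum_filter_add_sum_filter_not (Finset.univ)
    (fun g : Fin (k+1) ↪ Fin n => ∀ t, g t ≠ j) (fun g => ∏ t, X (g t))
  -- total = fiberwise over value at last position
  have htotal : ∑ g : Fin (k+1) ↪ Fin n, ∏ t, X (g t)
      = ∑ i, X i * Cvec n (k + 2 - 1) X i := by
    rw [← Finset.sum_fiberwise Finset.univ (fun g : Fin (k+1) ↪ Fin n => g (Fin.last k))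
      (fun g => ∏ t, X (g t))]
    exact Finset.sum_congr rfl fun i _ => by rw [emb_fiber_sum X i (Fin.last k), hC]
  -- hits sum
  have hhits : ∑ g ∈ Finset.univ.filter
        (fun g : Fin (k+1) ↪ Fin n => ¬ ∀ t, g t ≠ j), ∏ t, X (g t)
      = ((k : ℝ) + 1) * X j * Cvec n (k + 2 - 1) X j := by
    have key : ∀ g : Fin (k+1) ↪ Fin n,
        ∑ p, (if g p = j then ∏ t, X (g t) else 0)
          = if ¬ ∀ t, g t ≠ j then ∏ t, X (g t) else 0 := by
      intro g
      by_cases hg : ∀ t, g t ≠ j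
      · simp only [not_not, if_neg (not_not_intro hg)]
        exact Finset.sum_eq_zero fun p _ => if_neg (hg p)
      · rw [if_pos hg]
        push_neg at hg
        obtain ⟨p0, hp0⟩ := hg
        rw [Finset.sum_eq_single p0]
        · rw [if_pos hp0]
        · intro b _ hb
          exact if_neg fun h => hb (g.injective (h.trans hp0.symm))
        · simp
    calc ∑ g ∈ Finset.univ.filter
          (fun g : Fin (k+1) ↪ Fin n => ¬ ∀ t, g t ≠ j), ∏ t, X (g t)
        = ∑ g : Fin (k+1) ↪ Fin n,
            if ¬ ∀ t, g t ≠ j then ∏ t, X (g t) else 0 := Finset.sum_filter _ _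
      _ = ∑ g : Fin (k+1) ↪ Fin n, ∑ p, (if g p = j then ∏ t, X (g t) else 0) := by
            exact Finset.sum_congr rfl fun g _ => (key g).symm
      _ = ∑ p : Fin (k+1), ∑ g : Fin (k+1) ↪ Fin n,
            (if g p = j then ∏ t, X (g t) else 0) := Finset.sum_comm
      _ = ∑ p : Fin (k+1), X j * Cvec n (k + 2 - 1) X j := by
            refine Finset.sum_congr rfl fun p _ => ?_
            rw [← Finset.sum_filter, emb_fiber_sum X j p, hC]
      _ = ((k : ℝ) + 1) * X j * Cvec n (k + 2 - 1) X j := by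
            rw [Finset.sum_const, Finset.card_univ, Fintype.card_fin, nsmul_eq_mul]
            push_cast; ring
  have hcast : ((k + 2 : ℕ) : ℝ) - 1 = (k : ℝ) + 1 := by push_cast; ring
  rw [hCm, hcast]
  rw [← htotal, ← hsplit, hhits]
  ring


end
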